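/- arXiv:1808.03375 — 7 statements merged into one kernel-verified Lean document; each statement's English description precedes it below -/
import Mathlib

section
/- Let f : X → X be a map, A ⊆ X, and R : A → ℕ_{≥1} a coherent induced time for the induced map F(x) = f^{R(x)}(x). If x ∈ A_0 := ⋂_{n≥0} F^{-n}(X), 0 ≤ a < R(x), and f^a(x) ∈ A_0, then there exists b ≥ 1 with b ≤ #{a ≤ j < R(x) : f^j(x) ∈ A_0} such that R(x) = a + Σ_{j=0}^{b-1} R(F^j(f^a(x))). In particular F(x) = F^b(f^a(x)). -/
/-- For a coherent induced time, the induced time of a point decomposes along the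
orbit of any intermediate point of `A₀`. -/
theorem coherent_induced_time_decomposition {X : Type*} (f : X → X) (A : Set X)
    (R : X → ℕ)
    (hR1 : ∀ x ∈ A, 1 ≤ R x)
    (hcoh : ∀ x ∈ A, ∀ j, j < R x → f^[j] x ∈ A → R (f^[j] x) + j ≤ R x)
    (F : X → X) (hF : ∀ x, F x = f^[R x] x)
    (A₀ : Set X) (hA₀ : A₀ = {x | ∀ n : ℕ, F^[n] x ∈ A})
    (x : X) (hx : x ∈ A₀) (a : ℕ) (ha : a < R x) (hfa : f^[a] x ∈ A₀) :
    ∃ b : ℕ, 1 ≤ b ∧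
      b ≤ Set.ncard {j : ℕ | a ≤ j ∧ j < R x ∧ f^[j] x ∈ A₀} ∧
      R x = a + ∑ j ∈ Finset.range b, R (F^[j] (f^[a] x)) ∧
      F x = F^[b] (f^[a] x) := by
  -- A₀ is F-invariant and contained in A
  have hA₀A : A₀ ⊆ A := by
    intro y hy
    rw [hA₀] at hy
    simpa using hy 0
  have hA₀inv : ∀ y ∈ A₀, ∀ k : ℕ, F^[k] y ∈ A₀ := by
    intro y hy k
    rw [hA₀] at hy ⊢
    intro n
    rw [← Function.iterate_add_apply]
    exact hy (n + k)
  set S : ℕ → ℕ := fun k => ∑ j ∈ Finset.range k, R (F^[j] (f^[a] x)) with hS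
  have hSsucc : ∀ k, S (k + 1) = S k + R (F^[k] (f^[a] x)) := by
    intro k; simp [hS, Finset.sum_range_succ]
  have hFk : ∀ k, F^[k] (f^[a] x) = f^[a + S k] x := by
    intro k
    induction k with
    | zero => simp [hS]
    | succ k ih =>
      rw [Function.iterate_succ_apply', ih, hF, ← Function.iterate_add_apply,
        hSsucc]
      congr 1
      rw [ih]
      ring
  have hmem : ∀ k, F^[k] (f^[a] x) ∈ A₀ := fun k => hA₀inv _ hfa k
  have hSmono : StrictMono S := by
    apply strictMono_nat_of_lt_succ
    intro k
    have := hR1 _ (hA₀A (hmem k))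
    rw [hSsucc]; omega
  have hkey : ∀ k, a + S k < R x → a + S (k + 1) ≤ R x := by
    intro k hk
    have hxA : x ∈ A := hA₀A hx
    have hmA : f^[a + S k] x ∈ A := by rw [← hFk]; exact hA₀A (hmem k)
    have := hcoh x hxA (a + S k) hk hmA
    rw [← hFk] at this
    rw [hSsucc]
    omega
  -- find first b with a + S b ≥ R x
  have hex : ∃ k, R x ≤ a + S k := by
    refine ⟨R x, ?_⟩
    have : R x ≤ S (R x) := hSmono.le_apply
    omega
  set b := Nat.find hex with hb
  have hbspec : R x ≤ a + S b := Nat.find_spec hex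
  have hb1 : 1 ≤ b := by
    rcases Nat.eq_zero_or_pos b with h0 | h
    · exfalso
      have := Nat.find_spec hex
      rw [← hb, h0] at this
      simp [hS] at this
      omega
    · exact h
  have hprev : a + S (b - 1) < R x := by
    have := Nat.find_min hex (m := b - 1) (by omega)
    omega
  have heq : R x = a + S b := by
    have := hkey (b - 1) hprev
    have hb' : b - 1 + 1 = b := by omega
    rw [hb'] at this
    omega
  refine ⟨b, hb1, ?_, heq, ?_⟩
  · -- cardinality bound
    set T : Finset ℕ := Finset.image (fun k => a + S k) (Finset.range b) with hT
    have hTcard : T.card = b := by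
      rw [hT, Finset.card_image_of_injective _ (fun p q h => hSmono.injective (by omega)),
        Finset.card_range]
    have hsub : ↑T ⊆ {j : ℕ | a ≤ j ∧ j < R x ∧ f^[j] x ∈ A₀} := by
      intro j hj
      simp only [hT, Finset.coe_image, Set.mem_image, Finset.coe_range, Set.mem_Iio] at hj
      obtain ⟨k, hk, rfl⟩ := hj
      have hlt : a + S k < R x := by
        have := hSmono.le_iff_le.mpr (show k ≤ b - 1 by omega)
        omega
      refine ⟨by omega, hlt, ?_⟩
      rw [← hFk]
      exact hmem k
    have hfin : {j : ℕ | a ≤ j ∧ j < R x ∧ f^[j] x ∈ A₀}.Finite :=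
      (Set.finite_Iio (R x)).subset (fun j hj => hj.2.1)
    calc b = T.card := hTcard.symm
      _ = (↑T : Set ℕ).ncard := (Set.ncard_coe_finset T).symm
      _ ≤ _ := Set.ncard_le_ncard hsub hfin
  · rw [hF x, hFk b, heq]
end

section
/- Let f : X → X be a map and F(x) = f^{R(x)}(x) an induced map with coherent induced time R : A → ℕ_{≥1}. Then F is orbit-coherent: for all x, y ∈ ⋂_{j≥0} F^{-j}(X), the forward f-orbits of x and y intersect if and only if the forward F-orbits of x and y intersect. -/
private lemma induced_iter {X : Type*} (f : X → X) (R : X → ℕ) (F : X → X)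
    (hF : ∀ z, F z = f^[R z] z) (x : X) :
    ∀ k, F^[k] x = f^[∑ i ∈ Finset.range k, R (F^[i] x)] x := by
  intro k
  induction k with
  | zero => simp
  | succ k ih =>
      rw [Function.iterate_succ_apply', hF, Finset.sum_range_succ, ih,
        ← Function.iterate_add_apply, Nat.add_comm]

private lemma exists_gap (b : ℕ → ℕ) (hb0 : b 0 = 0) (hb : ∀ l, b l < b (l + 1)) :
    ∀ c, ∃ l, b l ≤ c ∧ c < b (l + 1) := by
  intro c
  induction c with
  | zero => exact ⟨0, by omega, by have := hb 0; omega⟩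
  | succ c ih =>
      obtain ⟨l, h1, h2⟩ := ih
      by_cases h : c + 1 < b (l + 1)
      · exact ⟨l, by omega, h⟩
      · exact ⟨l + 1, by omega, by have := hb (l + 1); omega⟩

/-- An induced map with a coherent induced time is orbit-coherent. -/
theorem coherent_time_orbit_coherent {X : Type*} (f : X → X) (A : Set X) (R : X → ℕ)
    (hR1 : ∀ x ∈ A, 1 ≤ R x)
    (hcoh : ∀ x ∈ A, ∀ j, j < R x → f^[j] x ∈ A → R (f^[j] x) + j ≤ R x)
    (F : X → X) (hF : ∀ x, F x = f^[R x] x)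
    (x y : X) (hx : ∀ n : ℕ, F^[n] x ∈ A) (hy : ∀ n : ℕ, F^[n] y ∈ A) :
    (∃ n m : ℕ, f^[n] x = f^[m] y) ↔ (∃ n m : ℕ, F^[n] x = F^[m] y) := by
  set a : ℕ → ℕ := fun k => ∑ i ∈ Finset.range k, R (F^[i] x) with ha
  set b : ℕ → ℕ := fun l => ∑ i ∈ Finset.range l, R (F^[i] y) with hb
  have hax : ∀ k, F^[k] x = f^[a k] x := induced_iter f R F hF x
  have hby : ∀ l, F^[l] y = f^[b l] y := induced_iter f R F hF y
  have haS : ∀ k, a (k + 1) = a k + R (F^[k] x) := fun k => Finset.sum_range_succ _ _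
  have hbS : ∀ l, b (l + 1) = b l + R (F^[l] y) := fun l => Finset.sum_range_succ _ _
  have hamono : ∀ k, a k < a (k + 1) := by
    intro k; have := hR1 _ (hx k); rw [haS]; omega
  have hbmono : ∀ l, b l < b (l + 1) := by
    intro l; have := hR1 _ (hy l); rw [hbS]; omega
  have hb0 : b 0 = 0 := by simp [hb]
  constructor
  · rintro ⟨n, m, hnm⟩
    -- each point F^[k] x with a k ≥ n equals f^[a k - n + m] y
    have hpt : ∀ k, n ≤ a k → f^[a k - n + m] y = F^[k] x := by
      intro k hk
      rw [Function.iterate_add_apply, ← hnm, ← Function.iterate_add_apply,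
        Nat.sub_add_cancel hk, hax]
    have key : ∀ d k l, n ≤ a k → b l ≤ a k - n + m → a k - n + m ≤ b (l + 1) →
        b (l + 1) - (a k - n + m) ≤ d → ∃ n' m', F^[n'] x = F^[m'] y := by
      intro d
      induction d with
      | zero =>
          intro k l hk h1 h2 h3
          refine ⟨k, l + 1, ?_⟩
          have hc : a k - n + m = b (l + 1) := by omega
          rw [← hpt k hk, hc, hby]
      | succ d ih =>
          intro k l hk h1 h2 h3
          by_cases hce : a k - n + m = b l
          · exact ⟨k, l, by rw [← hpt k hk, hce, hby]⟩
          by_cases hce' : a k - n + m = b (l + 1)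
          · exact ⟨k, l + 1, by rw [← hpt k hk, hce', hby]⟩
          -- strictly between: apply coherence at F^[l] y
          set c := a k - n + m with hc
          set j := c - b l with hj
          have hjlt : j < R (F^[l] y) := by have := hbS l; omega
          have hmem : f^[j] (F^[l] y) ∈ A := by
            have : f^[j] (F^[l] y) = F^[k] x := by
              rw [hby, ← Function.iterate_add_apply, ← hpt k hk]
              congr 1
              omega
            rw [this]; exact hx k
          have hR' := hcoh _ (hy l) j hjlt hmem
          have heqp : f^[j] (F^[l] y) = F^[k] x := by
            rw [hby, ← Function.iterate_add_apply, ← hpt k hk]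
            congr 1
            omega
          rw [heqp] at hR'
          -- now R (F^[k] x) + j ≤ R (F^[l] y)
          have hk' : n ≤ a (k + 1) := le_of_lt (lt_of_le_of_lt hk (hamono k))
          have ha1 := haS k
          have hb1 := hbS l
          have hRk := hR1 _ (hx k)
          apply ih (k + 1) l hk' (by omega) (by omega) (by omega)
    -- initialize
    have hage : ∀ k, k ≤ a k := by
      intro k
      induction k with
      | zero => omega
      | succ k ih => have := hamono k; omega
    have hk0 : n ≤ a n := hage n
    obtain ⟨l, h1, h2⟩ := exists_gap b hb0 hbmono (a n - n + m)
    exact key (b (l + 1) - (a n - n + m)) n l hk0 h1 (le_of_lt h2) le_rfl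
  · rintro ⟨n', m', h⟩
    exact ⟨a n', b m', by rw [← hax, ← hby, h]⟩
end

section
/- Let F be an orbit-coherent induced map (for f with induced time R), let A_0 = ⋂_{n≥0} F^{-n}(X), and let U ⊆ A_0 satisfy F^{-1}(U) = U. Then Ũ ∩ A_0 = U, where Ũ is the (f,R)-spreading of U, and the preimage under f restricted to the spreading of A_0 preserves Ũ: (f|_{Ã_0})^{-1}(Ũ) = Ũ. -/
/-- For an orbit-coherent induced map, the spreading of an F-invariant subset of A₀
intersects A₀ exactly in the set, and the spreading is invariant under the
restriction of f to the spreading of A₀. -/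
theorem orbit_coherent_spreading {X : Type*} (f : X → X) (A : Set X) (R : X → ℕ)
    (hR1 : ∀ x ∈ A, 1 ≤ R x)
    (F : X → X) (hF : ∀ x, F x = f^[R x] x)
    (A₀ : Set X) (hA₀ : A₀ = {x | ∀ n : ℕ, F^[n] x ∈ A})
    (horb : ∀ x ∈ A₀, ∀ y ∈ A₀,
      ((∃ n m : ℕ, f^[n] x = f^[m] y) ↔ (∃ n m : ℕ, F^[n] x = F^[m] y)))
    (U : Set X) (hU : U ⊆ A₀)
    (hinv : {x ∈ A₀ | F x ∈ U} = U)
    (Ut At : Set X)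
    (hUt : Ut = ⋃ x ∈ U, ⋃ j ∈ Finset.range (R x), {f^[j] x})
    (hAt : At = ⋃ x ∈ A₀, ⋃ j ∈ Finset.range (R x), {f^[j] x}) :
    Ut ∩ A₀ = U ∧ {x ∈ At | f x ∈ Ut} = Ut := by
  have hmemA0 : ∀ x, x ∈ A₀ ↔ ∀ n : ℕ, F^[n] x ∈ A := by
    intro x; rw [hA₀]; exact Iff.rfl
  have hA0A : ∀ x ∈ A₀, x ∈ A := fun x hx => (hmemA0 x).mp hx 0
  have hFA0 : ∀ x ∈ A₀, F x ∈ A₀ := by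
    intro x hx
    rw [hmemA0] at hx ⊢
    intro n
    have := hx (n + 1)
    rwa [Function.iterate_succ_apply] at this
  have hinv' : ∀ x, x ∈ A₀ ∧ F x ∈ U ↔ x ∈ U := by
    intro x
    rw [← Set.ext_iff.mp hinv x]
    simp [Set.mem_sep_iff]
  have hfwd : ∀ x ∈ U, F x ∈ U := fun x hx => ((hinv' x).mpr hx).2
  have hfwdIter : ∀ n : ℕ, ∀ x ∈ U, F^[n] x ∈ U := by
    intro n
    induction n with
    | zero => intro x hx; exact hx
    | succ n ih =>
      intro x hx
      rw [Function.iterate_succ_apply]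
      exact ih _ (hfwd x hx)
  have hback : ∀ m : ℕ, ∀ y ∈ A₀, F^[m] y ∈ U → y ∈ U := by
    intro m
    induction m with
    | zero => intro y _ h; exact h
    | succ m ih =>
      intro y hy h
      rw [Function.iterate_succ_apply] at h
      exact (hinv' y).mp ⟨hy, ih _ (hFA0 y hy) h⟩
  have key : ∀ x ∈ A₀, ∀ y ∈ U, (∃ n m : ℕ, f^[n] x = f^[m] y) → x ∈ U := by
    intro x hx y hy h
    obtain ⟨n, m, hnm⟩ := (horb x hx y (hU hy)).mp h
    apply hback n x hx
    rw [hnm]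
    exact hfwdIter m y hy
  have hUtmem : ∀ z, z ∈ Ut ↔ ∃ x ∈ U, ∃ j < R x, z = f^[j] x := by
    intro z
    rw [hUt]
    simp only [Set.mem_iUnion, Set.mem_singleton_iff, Finset.mem_range, exists_prop]
  have hAtmem : ∀ z, z ∈ At ↔ ∃ x ∈ A₀, ∃ j < R x, z = f^[j] x := by
    intro z
    rw [hAt]
    simp only [Set.mem_iUnion, Set.mem_singleton_iff, Finset.mem_range, exists_prop]
  constructor
  · ext z
    constructor
    · rintro ⟨hzUt, hzA0⟩
      obtain ⟨x, hxU, j, hj, rfl⟩ := (hUtmem _).mp hzUt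
      exact key _ hzA0 x hxU ⟨0, j, rfl⟩
    · intro hz
      exact ⟨(hUtmem z).mpr ⟨z, hz, 0, hR1 z (hA0A z (hU hz)), rfl⟩, hU hz⟩
  · ext z
    simp only [Set.mem_sep_iff]
    constructor
    · rintro ⟨hzAt, hfz⟩
      obtain ⟨x, hxA0, j, hj, rfl⟩ := (hAtmem _).mp hzAt
      obtain ⟨y, hyU, k, hk, hfe⟩ := (hUtmem _).mp hfz
      rw [← Function.iterate_succ_apply' f j x] at hfe
      have hxU : x ∈ U := key x hxA0 y hyU ⟨j + 1, k, hfe⟩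
      exact (hUtmem _).mpr ⟨x, hxU, j, hj, rfl⟩
    · intro hz
      obtain ⟨x, hxU, j, hj, rfl⟩ := (hUtmem _).mp hz
      refine ⟨(hAtmem _).mpr ⟨x, hU hxU, j, hj, rfl⟩, ?_⟩
      by_cases h : j + 1 < R x
      · exact (hUtmem _).mpr ⟨x, hxU, j + 1, h,
          (Function.iterate_succ_apply' f j x).symm⟩
      · have hj1 : j + 1 = R x := le_antisymm hj (not_lt.mp h)
        have hFxU : F x ∈ U := hfwd x hxU
        refine (hUtmem _).mpr ⟨F x, hFxU, 0, hR1 _ (hA0A _ (hU hFxU)), ?_⟩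
        rw [hF x, ← hj1, Function.iterate_succ_apply', Function.iterate_zero_apply]
end

section
/- Let (X, 𝔄, μ) be a finite measure space, f : X → X measurable and non-singular with respect to μ, and F : A → X an induced map (F(x) = f^{R(x)}(x) for a measurable induced time R). Suppose μ(A_0) > 0, where A_0 = ⋂_{n≥0} F^{-n}(X). If F is orbit-coherent and μ is f-ergodic (every f-invariant measurable set has measure 0 or full measure), then μ restricted to A_0 is F-ergodic. -/
open MeasureTheory

private lemma io_aux {X : Type*} [MeasurableSpace X] (μ : Measure X)
    (f : X → X) (hf : Measurable f)
    (hergf : ∀ V : Set X, MeasurableSet V → f ⁻¹' V = V → μ V = 0 ∨ μ Vᶜ = 0)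
    (S : Set X) (hS : MeasurableSet S) (hpos : 0 < μ S)
    (hhit : ∀ x ∈ S, ∀ N : ℕ, ∃ n, N ≤ n ∧ f^[n] x ∈ S) :
    μ {x | ∀ N : ℕ, ∃ n, N ≤ n ∧ f^[n] x ∈ S}ᶜ = 0 := by
  set W := {x | ∀ N : ℕ, ∃ n, N ≤ n ∧ f^[n] x ∈ S} with hW
  have hWeq : W = ⋂ N : ℕ, ⋃ n : ℕ, ⋃ _ : N ≤ n, f^[n] ⁻¹' S := by
    ext x; simp [hW]
  have hWm : MeasurableSet W := by
    rw [hWeq]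
    exact MeasurableSet.iInter fun N => MeasurableSet.iUnion fun n =>
      MeasurableSet.iUnion fun _ => (hf.iterate n) hS
  have hWinv : f ⁻¹' W = W := by
    ext x
    simp only [Set.mem_preimage, hW, Set.mem_setOf_eq]
    constructor
    · intro h N
      obtain ⟨n, hn, hns⟩ := h N
      exact ⟨n + 1, by omega, by rwa [Function.iterate_succ_apply]⟩
    · intro h N
      obtain ⟨n, hn, hns⟩ := h (N + 1)
      refine ⟨n - 1, by omega, ?_⟩
      rw [show n = n - 1 + 1 by omega] at hns
      rwa [Function.iterate_succ_apply] at hns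
  rcases hergf W hWm hWinv with h | h
  · exact absurd (le_antisymm ((measure_mono fun x hx => hhit x hx).trans h.le)
      zero_le) hpos.ne'
  · exact h

/-- If f is non-singular and μ-ergodic and the induced map F is orbit-coherent with
μ(A₀) > 0, then μ restricted to A₀ is F-ergodic. -/
theorem orbit_coherent_ergodic {X : Type*} [MeasurableSpace X]
    (μ : Measure X) [IsFiniteMeasure μ] (f : X → X) (hf : Measurable f)
    (hns : μ.map f ≪ μ)
    (hergf : ∀ V : Set X, MeasurableSet V → f ⁻¹' V = V → μ V = 0 ∨ μ Vᶜ = 0)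
    (A : Set X) (hA : MeasurableSet A) (R : X → ℕ) (hR : Measurable R)
    (hR1 : ∀ x ∈ A, 1 ≤ R x)
    (F : X → X) (hF : ∀ x, F x = f^[R x] x)
    (A₀ : Set X) (hA₀ : A₀ = {x | ∀ n : ℕ, F^[n] x ∈ A})
    (hpos : 0 < μ A₀)
    (horb : ∀ x ∈ A₀, ∀ y ∈ A₀,
      ((∃ n m : ℕ, f^[n] x = f^[m] y) ↔ (∃ n m : ℕ, F^[n] x = F^[m] y))) :
    ∀ V : Set X, MeasurableSet V → F ⁻¹' V = V →
      μ.restrict A₀ V = 0 ∨ μ.restrict A₀ Vᶜ = 0 := by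
  intro V hV hVinv
  -- measurability of F and A₀
  have hFm : Measurable F := by
    have hFe : F = fun x => (fun p : X × ℕ => f^[p.2] p.1) (x, R x) := funext hF
    rw [hFe]
    have h2 : Measurable fun p : X × ℕ => f^[p.2] p.1 :=
      measurable_from_prod_countable_left fun n => hf.iterate n
    exact h2.comp (measurable_id.prodMk hR)
  have hA₀m : MeasurableSet A₀ := by
    rw [hA₀]
    have he : {x | ∀ n : ℕ, F^[n] x ∈ A} = ⋂ n : ℕ, F^[n] ⁻¹' A := by ext x; simp
    rw [he]
    exact MeasurableSet.iInter fun n => (hFm.iterate n) hA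
  -- A₀ is F-forward-invariant
  have hFnA₀ : ∀ x ∈ A₀, ∀ n, F^[n] x ∈ A₀ := by
    intro x hx n
    rw [hA₀] at hx ⊢
    intro m
    rw [← Function.iterate_add_apply]
    exact hx (m + n)
  -- F-iterates are f-iterates with large times on A₀
  have hkey : ∀ x ∈ A₀, ∀ n, ∃ k, n ≤ k ∧ F^[n] x = f^[k] x := by
    intro x hx n
    induction n with
    | zero => exact ⟨0, le_refl _, rfl⟩
    | succ n ih =>
      obtain ⟨k, hk, hek⟩ := ih
      refine ⟨R (F^[n] x) + k, ?_, ?_⟩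
      · have hmem : F^[n] x ∈ A := by
          have h0 := hFnA₀ x hx n
          rw [hA₀] at h0
          exact h0 0
        have h1 := hR1 _ hmem
        omega
      · rw [Function.iterate_succ_apply', hF, hek, ← Function.iterate_add_apply]
  -- forward invariance of F-invariant sets
  have hUinv : ∀ U : Set X, F ⁻¹' U = U → ∀ x ∈ U, ∀ n, F^[n] x ∈ U := by
    intro U hU x hx n
    induction n with
    | zero => exact hx
    | succ n ih =>
      rw [Function.iterate_succ_apply']
      have : F^[n] x ∈ F ⁻¹' U := by rw [hU]; exact ih
      exact this
  have hVcinv : F ⁻¹' Vᶜ = Vᶜ := by rw [Set.preimage_compl, hVinv]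
  by_contra hcon
  push_neg at hcon
  obtain ⟨h1, h2⟩ := hcon
  rw [Measure.restrict_apply hV] at h1
  rw [Measure.restrict_apply hV.compl] at h2
  -- the two hitting lemmas
  have hhitgen : ∀ (U : Set X), F ⁻¹' U = U → ∀ x ∈ U ∩ A₀, ∀ N : ℕ,
      ∃ n, N ≤ n ∧ f^[n] x ∈ U ∩ A₀ := by
    intro U hU x hx N
    obtain ⟨k, hk, hek⟩ := hkey x hx.2 N
    exact ⟨k, hk, by rw [← hek]; exact ⟨hUinv U hU x hx.1 N, hFnA₀ x hx.2 N⟩⟩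
  have hS0 := io_aux μ f hf hergf (V ∩ A₀) (hV.inter hA₀m) (pos_iff_ne_zero.mpr h1)
    (hhitgen V hVinv)
  have hT0 := io_aux μ f hf hergf (Vᶜ ∩ A₀) (hV.compl.inter hA₀m)
    (pos_iff_ne_zero.mpr h2) (hhitgen Vᶜ hVcinv)
  set WS := {x | ∀ N : ℕ, ∃ n, N ≤ n ∧ f^[n] x ∈ V ∩ A₀}
  set WT := {x | ∀ N : ℕ, ∃ n, N ≤ n ∧ f^[n] x ∈ Vᶜ ∩ A₀}
  have hne : (WS ∩ WT).Nonempty := by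
    rw [Set.nonempty_iff_ne_empty]
    intro he
    have hcover : (Set.univ : Set X) ⊆ WSᶜ ∪ WTᶜ := by
      intro x _
      by_contra hx
      simp only [Set.mem_union, Set.mem_compl_iff, not_or, not_not] at hx
      exact absurd (Set.mem_inter hx.1 hx.2) (by rw [he]; exact Set.notMem_empty x)
    have h0 : μ Set.univ = 0 :=
      measure_mono_null hcover (measure_union_null hS0 hT0)
    exact absurd (le_antisymm ((measure_mono (Set.subset_univ A₀)).trans h0.le)
      zero_le) hpos.ne'
  obtain ⟨x, hxS, hxT⟩ := hne
  obtain ⟨n₁, -, hy⟩ := hxS 0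
  obtain ⟨n₂, -, hz⟩ := hxT 0
  have horbint : ∃ n m : ℕ, f^[n] (f^[n₁] x) = f^[m] (f^[n₂] x) :=
    ⟨n₂, n₁, by rw [← Function.iterate_add_apply, ← Function.iterate_add_apply,
      Nat.add_comm]⟩
  obtain ⟨a, b, hab⟩ := (horb _ hy.2 _ hz.2).mp horbint
  have hV1 : F^[a] (f^[n₁] x) ∈ V := hUinv V hVinv _ hy.1 a
  have hV2 : F^[b] (f^[n₂] x) ∈ Vᶜ := hUinv Vᶜ hVcinv _ hz.1 b
  rw [hab] at hV1
  exact hV2 hV1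
end

section
/- Let (X, 𝔄, μ) be a probability space, f : X → X measure-preserving, and F : A → X a measurable induced map with induced time R. If ν is an F-invariant probability measure, then μ̃ := Σ_{j≥0} (f^j)_*(ν|_{{R > j}}) is an f-invariant measure with total mass μ̃(X) = ∫ R dν. -/
open MeasureTheory
open scoped ENNReal

set_option maxHeartbeats 1000000

/-- Folklore result II: the projection of an F-invariant probability is an
f-invariant measure with total mass ∫ R dν. -/
theorem lift_projection {X : Type*} [MeasurableSpace X]
    (μ : Measure X) [IsProbabilityMeasure μ] (f : X → X) (hf : Measurable f)
    (hμ : μ.map f = μ)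
    (A : Set X) (hA : MeasurableSet A) (R : X → ℕ) (hR : Measurable R)
    (hR1 : ∀ x ∈ A, 1 ≤ R x)
    (F : X → X) (hF : ∀ x, F x = f^[R x] x)
    (ν : Measure X) [IsProbabilityMeasure ν] (hνA : ν A = 1)
    (hν : ν.map F = ν)
    (μt : Measure X)
    (hμt : μt = Measure.sum (fun j : ℕ => (ν.restrict {x ∈ A | j < R x}).map f^[j])) :
    μt.map f = μt ∧ μt Set.univ = ∫⁻ x, (R x : ℝ≥0∞) ∂ν := by
  -- notation
  set Aset : ℕ → Set X := fun j => {x ∈ A | j < R x} with hAset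
  set Bset : ℕ → Set X := fun j => {x ∈ A | R x = j} with hBset
  have mR : ∀ j : ℕ, MeasurableSet {x | j < R x} := fun j => hR measurableSet_Ioi
  have mA : ∀ j, MeasurableSet (Aset j) := fun j => hA.inter (mR j)
  have mB : ∀ j, MeasurableSet (Bset j) :=
    fun j => hA.inter (hR (measurableSet_singleton j))
  have hAc : ν Aᶜ = 0 := (prob_compl_eq_zero_iff hA).2 hνA
  -- A₀ = A
  have hA0 : Aset 0 = A := by
    ext x; simp only [hAset, Set.mem_setOf_eq, Set.mem_sep_iff]
    exact ⟨fun h => h.1, fun h => ⟨h, hR1 x h⟩⟩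
  -- F is measurable
  have hFm : Measurable F := by
    have h1 : Measurable fun p : X × ℕ => f^[p.2] p.1 :=
      measurable_from_prod_countable_left fun n => hf.iterate n
    have h2 : Measurable fun x => f^[R x] x := h1.comp (measurable_id.prodMk hR)
    have : F = fun x => f^[R x] x := funext hF
    rwa [this]
  -- splitting A_j = A_{j+1} ∪ B_{j+1}
  have hsplit : ∀ j : ℕ, Aset j = Aset (j + 1) ∪ Bset (j + 1) := by
    intro j; ext x
    simp only [hAset, hBset, Set.mem_sep_iff, Set.mem_union, Set.mem_setOf_eq]
    constructor
    · rintro ⟨hx, hlt⟩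
      rcases lt_or_eq_of_le (Nat.succ_le_of_lt hlt) with h | h
      · exact Or.inl ⟨hx, h⟩
      · exact Or.inr ⟨hx, h.symm⟩
    · rintro (⟨hx, h⟩ | ⟨hx, h⟩)
      · exact ⟨hx, Nat.lt_of_succ_lt h⟩
      · exact ⟨hx, h ▸ Nat.lt_succ_self j⟩
  have hdisj : ∀ j : ℕ, Disjoint (Aset (j + 1)) (Bset (j + 1)) := by
    intro j
    refine Set.disjoint_left.2 ?_
    rintro x ⟨_, hlt⟩ ⟨_, heq⟩
    omega
  -- μt of a measurable set
  have hμts : ∀ s : Set X, MeasurableSet s →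
      μt s = ∑' j : ℕ, ν (Aset j ∩ f^[j] ⁻¹' s) := by
    intro s hs
    rw [hμt, Measure.sum_apply _ hs]
    refine tsum_congr fun j => ?_
    rw [Measure.map_apply (hf.iterate j) hs,
      Measure.restrict_apply ((hf.iterate j) hs), Set.inter_comm]
  constructor
  · -- invariance
    ext s hs
    rw [Measure.map_apply hf hs, hμts _ (hf hs), hμts s hs]
    -- rewrite LHS terms
    have hterm : ∀ j : ℕ,
        ν (Aset j ∩ f^[j] ⁻¹' (f ⁻¹' s))
          = ν (Aset (j + 1) ∩ f^[j + 1] ⁻¹' s) + ν (Bset (j + 1) ∩ F ⁻¹' s) := by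
      intro j
      have hiter : f^[j] ⁻¹' (f ⁻¹' s) = f^[j + 1] ⁻¹' s := by
        rw [Function.iterate_succ' f j, Set.preimage_comp]
      rw [hiter, hsplit j, Set.union_inter_distrib_right,
        measure_union ((hdisj j).mono Set.inter_subset_left Set.inter_subset_left)
          ((mB (j + 1)).inter ((hf.iterate (j + 1)) hs))]
      congr 1
      congr 1
      ext x
      simp only [Set.mem_inter_iff, hBset, Set.mem_sep_iff, Set.mem_preimage]
      constructor
      · rintro ⟨⟨hx, hRx⟩, hfs⟩
        exact ⟨⟨hx, hRx⟩, by rwa [hF x, hRx]⟩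
      · rintro ⟨⟨hx, hRx⟩, hfs⟩
        refine ⟨⟨hx, hRx⟩, ?_⟩
        rwa [hF x, hRx] at hfs
    simp_rw [hterm]
    rw [ENNReal.tsum_add]
    -- second sum equals ν s
    have hBsum : ∑' j : ℕ, ν (Bset (j + 1) ∩ F ⁻¹' s) = ν s := by
      have hdisjB : Pairwise (Function.onFun Disjoint fun j : ℕ =>
          Bset (j + 1) ∩ F ⁻¹' s) := by
        intro i k hik
        refine Set.disjoint_left.2 ?_
        rintro x ⟨⟨_, hi⟩, _⟩ ⟨⟨_, hk⟩, _⟩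
        exact hik (by omega)
      rw [← measure_iUnion hdisjB fun j => (mB (j + 1)).inter (hFm hs)]
      have hUnion : (⋃ j : ℕ, Bset (j + 1) ∩ F ⁻¹' s) = A ∩ F ⁻¹' s := by
        ext x
        simp only [Set.mem_iUnion, Set.mem_inter_iff, hBset, Set.mem_sep_iff]
        constructor
        · rintro ⟨j, ⟨hx, _⟩, hfs⟩; exact ⟨hx, hfs⟩
        · rintro ⟨hx, hfs⟩
          obtain ⟨k, hk⟩ : ∃ k, R x = k + 1 :=
            ⟨R x - 1, by have := hR1 x hx; omega⟩
          exact ⟨k, ⟨hx, hk⟩, hfs⟩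
      rw [hUnion, Set.inter_comm, measure_inter_conull hAc,
        ← Measure.map_apply hFm hs, hν]
    rw [hBsum]
    -- RHS : peel off the first term
    conv_rhs => rw [tsum_eq_zero_add' ENNReal.summable]
    have h0 : ν (Aset 0 ∩ f^[0] ⁻¹' s) = ν s := by
      rw [hA0, Function.iterate_zero, Set.preimage_id, Set.inter_comm,
        measure_inter_conull hAc]
    rw [h0, add_comm]
  · -- total mass
    rw [hμts Set.univ MeasurableSet.univ]
    have hint : ∫⁻ x, (R x : ℝ≥0∞) ∂ν = ∑' j : ℕ, ν {x | j < R x} := by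
      have hfun : ∀ x, (R x : ℝ≥0∞)
          = ∑' j : ℕ, Set.indicator {x | j < R x} (1 : X → ℝ≥0∞) x := by
        intro x
        symm
        calc ∑' j : ℕ, Set.indicator {y | j < R y} (1 : X → ℝ≥0∞) x
            = ∑ j ∈ Finset.range (R x), Set.indicator {y | j < R y} (1 : X → ℝ≥0∞) x :=
              tsum_eq_sum
                (fun j hj => Set.indicator_of_notMem (fun h => hj (Finset.mem_range.2 h)) 1)
          _ = ∑ j ∈ Finset.range (R x), 1 := Finset.sum_congr rfl fun j hj =>
              Set.indicator_of_mem (Finset.mem_range.mp hj : j < R x) 1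
          _ = (R x : ℝ≥0∞) := by simp
      simp_rw [hfun]
      rw [lintegral_tsum fun j =>
        (measurable_one.indicator (mR j)).aemeasurable]
      refine tsum_congr fun j => ?_
      rw [lintegral_indicator (mR j)]
      simp
    rw [hint]
    refine tsum_congr fun j => ?_
    have : Aset j ∩ f^[j] ⁻¹' Set.univ = Aset j := by simp
    rw [this]
    have : Aset j = {x | j < R x} ∩ A := by
      rw [hAset]; ext x; simp [Set.mem_sep_iff, and_comm]
    rw [this, measure_inter_conull hAc]
end

section
/- Let f : X → X be an injective map, 𝒰 an f-coherent schedule of events, B_𝒰 its coherent block, and F(x) = f^{min 𝒰(x)}(x) the first 𝒰-time map defined on X_1(𝒰) = {x : 𝒰(x) ≠ ∅}. Then F(B_𝒰 ∩ X_1(𝒰)) ⊆ B_𝒰, the restriction F|_{B_𝒰 ∩ X_1(𝒰)} is injective, and F restricted to B_𝒰 ∩ X_1(𝒰) coincides with the first return map (under f) to B_𝒰. -/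
/-- The first 𝒰-time map preserves the coherent block, is injective on it, and is
the first return map to the coherent block. -/
theorem coherent_block_first_return {X : Type*} (f : X → X)
    (hf : Function.Injective f)
    (𝒰 : X → Set ℕ) (h0 : ∀ x, 0 ∉ 𝒰 x)
    (hP1 : ∀ x, ∀ n ∈ 𝒰 x, ∀ j < n, n - j ∈ 𝒰 (f^[j] x))
    (hP2 : ∀ x, ∀ n ∈ 𝒰 x, ∀ m ∈ 𝒰 (f^[n] x), n + m ∈ 𝒰 x)
    (B : Set X) (hB : B = {x | ∀ j : ℕ, 1 ≤ j → ∃ y, f^[j] y = x ∧ j ∈ 𝒰 y})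
    (X₁ : Set X) (hX₁ : X₁ = {x | (𝒰 x).Nonempty})
    (F : X → X) (hF : ∀ x, F x = f^[sInf (𝒰 x)] x) :
    F '' (B ∩ X₁) ⊆ B ∧ Set.InjOn F (B ∩ X₁) ∧
    (∀ x ∈ B ∩ X₁, sInf (𝒰 x) = sInf {j : ℕ | 1 ≤ j ∧ f^[j] x ∈ B}) := by
  subst hB hX₁
  have hmem : ∀ x, (𝒰 x).Nonempty → sInf (𝒰 x) ∈ 𝒰 x := fun x h => Nat.sInf_mem h
  have hpos : ∀ x, (𝒰 x).Nonempty → 1 ≤ sInf (𝒰 x) := by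
    intro x h
    rcases Nat.eq_zero_or_pos (sInf (𝒰 x)) with h' | h'
    · exact absurd (h' ▸ hmem x h) (h0 x)
    · exact h'
  have key : ∀ x, (∀ j : ℕ, 1 ≤ j → ∃ y, f^[j] y = x ∧ j ∈ 𝒰 y) → (𝒰 x).Nonempty →
      ∀ j : ℕ, 1 ≤ j → ∃ y, f^[j] y = F x ∧ j ∈ 𝒰 y := by
    intro x hxB hx1 j hj
    set n := sInf (𝒰 x) with hn
    have hnU : n ∈ 𝒰 x := hmem x hx1
    have hn1 : 1 ≤ n := hpos x hx1
    rw [hF x, ← hn]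
    rcases le_or_gt j n with hle | hlt
    · refine ⟨f^[n - j] x, ?_, ?_⟩
      · rw [← Function.iterate_add_apply]
        congr 1; omega
      · have := hP1 x n hnU (n - j) (by omega)
        simpa [Nat.sub_sub_self hle] using this
    · obtain ⟨y, hy, hyU⟩ := hxB (j - n) (by omega)
      refine ⟨y, ?_, ?_⟩
      · rw [show j = n + (j - n) by omega, Function.iterate_add_apply, hy]
      · have hn' : n ∈ 𝒰 (f^[j - n] y) := by rw [hy]; exact hnU
        have := hP2 y (j - n) hyU n hn'
        simpa [show j - n + n = j by omega] using this
  refine ⟨?_, ?_, ?_⟩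
  · rintro _ ⟨x, ⟨hxB, hx1⟩, rfl⟩
    exact key x hxB hx1
  · have main : ∀ x x', (∀ j : ℕ, 1 ≤ j → ∃ y, f^[j] y = x ∧ j ∈ 𝒰 y) →
        (𝒰 x).Nonempty → (𝒰 x').Nonempty →
        sInf (𝒰 x) ≤ sInf (𝒰 x') → f^[sInf (𝒰 x)] x = f^[sInf (𝒰 x')] x' → x = x' := by
      intro x x' hxB hx1 hx'1 hnm hFx
      set n := sInf (𝒰 x) with hn
      set m := sInf (𝒰 x') with hm
      have hx : x = f^[m - n] x' := by
        apply Function.Injective.iterate hf n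
        rw [hFx, ← Function.iterate_add_apply]
        congr 1; omega
      by_cases hmn : m = n
      · apply Function.Injective.iterate hf n
        rw [hFx, hmn]
      · exfalso
        have h2 := hpos x hx1
        obtain ⟨y, hy, hyU⟩ := hxB (m - n) (by omega)
        have hyx : y = x' := by
          apply Function.Injective.iterate hf (m - n)
          rw [hy, hx]
        rw [hyx] at hyU
        have h1 := Nat.sInf_le hyU
        omega
    rintro x ⟨hxB, hx1⟩ x' ⟨hx'B, hx'1⟩ hFx
    rw [hF x, hF x'] at hFx
    rcases le_total (sInf (𝒰 x)) (sInf (𝒰 x')) with h | h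
    · exact main x x' hxB hx1 hx'1 h hFx
    · exact (main x' x hx'B hx'1 hx1 h hFx.symm).symm
  · rintro x ⟨hxB, hx1⟩
    set n := sInf (𝒰 x) with hn
    have hnU : n ∈ 𝒰 x := hmem x hx1
    have hn1 : 1 ≤ n := hpos x hx1
    have hnS : n ∈ {j : ℕ | 1 ≤ j ∧ f^[j] x ∈
        {x | ∀ j : ℕ, 1 ≤ j → ∃ y, f^[j] y = x ∧ j ∈ 𝒰 y}} := by
      refine ⟨hn1, ?_⟩
      have h := key x hxB hx1
      rw [hF x, ← hn] at h
      exact h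
    apply le_antisymm
    · apply le_csInf ⟨n, hnS⟩
      rintro j ⟨hj1, hjB⟩
      obtain ⟨y, hy, hyU⟩ := hjB j hj1
      have : y = x := Function.Injective.iterate hf j hy
      exact Nat.sInf_le (this ▸ hyU)
    · exact Nat.sInf_le hnS
end

section
/- Let (X, d) be a metric space, f : X → X measurable, R : X → ℕ ∪ {+∞} lower semicontinuous, and x ∈ X. Let 𝛀_f(x) be the set of weak* accumulation points of the empirical measures (1/n) Σ_{j=0}^{n-1} δ_{f^j(x)}. Then for every μ ∈ 𝛀_f(x) and every n ≥ 1, μ({R ≥ n}) ≤ d^+_ℕ({j ≥ 0 : R(f^j(x)) ≥ n}). Consequently ∫ R dμ ≤ Σ_{n=1}^∞ d^+_ℕ({j ≥ 0 : R(f^j(x)) ≥ n}), and if lim_{n→∞} d^+_ℕ({j ≥ 0 : R(f^j(x)) ≥ n}) = 0 then μ({R = +∞}) = 0 for every μ ∈ 𝛀_f(x). -/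
open MeasureTheory Filter
open scoped ENNReal

lemma emp_apply {X : Type*} [MeasurableSpace X] (z : ℕ → X) (N : ℕ) {S : Set X}
    (hS : MeasurableSet S) :
    (((N : ℝ≥0∞))⁻¹ • ∑ j ∈ Finset.range N, Measure.dirac (z j)) S
      = (Set.ncard {j : ℕ | j < N ∧ z j ∈ S} : ℝ≥0∞) / (N : ℝ≥0∞) := by
  classical
  have hset : {j : ℕ | j < N ∧ z j ∈ S}
      = ↑((Finset.range N).filter fun j => z j ∈ S) := by
    ext j; simp [Finset.mem_filter, Finset.mem_range]
  rw [Measure.smul_apply, Measure.finset_sum_apply]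
  simp only [Measure.dirac_apply' _ hS, Set.indicator_apply, Pi.one_apply]
  rw [Finset.sum_boole, hset, Set.ncard_coe_finset, ENNReal.div_eq_inv_mul]
  rfl

lemma enat_tsum_repr (m : ℕ∞) :
    (m : ℝ≥0∞) = ∑' n : ℕ, (if ((n+1:ℕ):ℕ∞) ≤ m then (1:ℝ≥0∞) else 0) := by
  induction m using ENat.recTopCoe with
  | top =>
    simp only [le_top, if_true]
    rw [ENNReal.tsum_const_eq_top_of_ne_zero one_ne_zero]
    rfl
  | coe k =>
    have h : ∀ n : ℕ, (((n+1:ℕ):ℕ∞) ≤ (k:ℕ∞)) ↔ n < k := by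
      intro n; rw [Nat.cast_le]; omega
    simp only [h]
    rw [tsum_eq_sum (s := Finset.range k) (by intro n hn; simp [Finset.mem_range] at hn; simp [hn])]
    simp [Finset.filter_true_of_mem (fun n hn => Finset.mem_range.mp hn)]

/-- For a lower semicontinuous R : X → ℕ ∪ {∞} and a weak* accumulation point μ of
the empirical measures of x, the μ-measure of {R ≥ n} is bounded by the upper
density of the times j with R(f^j x) ≥ n; consequently ∫ R dμ is bounded by the
tail sum, and if the residue vanishes then μ({R = ∞}) = 0. -/
theorem empirical_accumulation_tail {X : Type*} [MetricSpace X] [MeasurableSpace X]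
    [BorelSpace X] (f : X → X) (x : X)
    (R : X → ℕ∞) (hR : LowerSemicontinuous R)
    (μ : Measure X) [IsProbabilityMeasure μ]
    (φ : ℕ → ℕ) (hφ : StrictMono φ) (hφ1 : ∀ i, 1 ≤ φ i)
    (hconv : ∀ g : BoundedContinuousFunction X ℝ,
      Tendsto (fun i : ℕ => (∑ j ∈ Finset.range (φ i), g (f^[j] x)) / (φ i : ℝ))
        atTop (nhds (∫ y, g y ∂μ))) :
    (∀ n : ℕ, 1 ≤ n → μ {y | (n : ℕ∞) ≤ R y} ≤
      limsup (fun N : ℕ =>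
        (Set.ncard {j : ℕ | j < N ∧ (n : ℕ∞) ≤ R (f^[j] x)} : ℝ≥0∞) / (N : ℝ≥0∞)) atTop) ∧
    (∫⁻ y, (R y : ℝ≥0∞) ∂μ ≤
      ∑' n : ℕ, limsup (fun N : ℕ =>
        (Set.ncard {j : ℕ | j < N ∧ ((n + 1 : ℕ) : ℕ∞) ≤ R (f^[j] x)} : ℝ≥0∞) / (N : ℝ≥0∞)) atTop) ∧
    (Tendsto (fun n : ℕ => limsup (fun N : ℕ =>
        (Set.ncard {j : ℕ | j < N ∧ (n : ℕ∞) ≤ R (f^[j] x)} : ℝ≥0∞) / (N : ℝ≥0∞)) atTop)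
        atTop (nhds 0) →
      μ {y | R y = ⊤} = 0) := by
  classical
  -- empirical measures
  set ν : ℕ → Measure X := fun i =>
    ((φ i : ℝ≥0∞))⁻¹ • ∑ j ∈ Finset.range (φ i), Measure.dirac (f^[j] x) with hν
  have hφ0 : ∀ i, (φ i : ℝ≥0∞) ≠ 0 := by
    intro i
    exact_mod_cast Nat.cast_ne_zero.mpr (Nat.one_le_iff_ne_zero.mp (hφ1 i))
  have hνprob : ∀ i, IsProbabilityMeasure (ν i) := by
    intro i
    constructor
    rw [hν]
    simp only [Measure.smul_apply, Measure.finset_sum_apply,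
      Measure.dirac_apply_of_mem (Set.mem_univ _), Finset.sum_const, Finset.card_range,
      nsmul_eq_mul, mul_one, smul_eq_mul]
    exact ENNReal.inv_mul_cancel (hφ0 i) (ENNReal.natCast_ne_top _)
  set P : ℕ → ProbabilityMeasure X := fun i => ⟨ν i, hνprob i⟩ with hPdef
  set Pμ : ProbabilityMeasure X := ⟨μ, ‹IsProbabilityMeasure μ›⟩ with hPμ
  have hP : Tendsto P atTop (nhds Pμ) := by
    rw [MeasureTheory.ProbabilityMeasure.tendsto_iff_forall_integral_tendsto]
    intro g
    have hcalc : ∀ i, ∫ y, g y ∂(ν i) = (∑ j ∈ Finset.range (φ i), g (f^[j] x)) / (φ i : ℝ) := by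
      intro i
      have : Integrable (fun y => g y) (∑ j ∈ Finset.range (φ i), Measure.dirac (f^[j] x)) := by
        apply integrable_finset_sum_measure.mpr
        intro j _
        exact g.integrable _
      rw [hν, integral_smul_measure,
        integral_finset_sum_measure (fun j _ => g.integrable _)]
      simp only [integral_dirac]
      rw [ENNReal.toReal_inv, ENNReal.toReal_natCast, smul_eq_mul, inv_mul_eq_div]
    show Tendsto (fun i => ∫ ω, g ω ∂(ν i)) atTop (nhds (∫ ω, g ω ∂μ))
    simp_rw [hcalc]
    exact hconv g
  -- measurability/openness of superlevel sets
  have hopen : ∀ n : ℕ, 1 ≤ n → IsOpen {y | (n : ℕ∞) ≤ R y} := by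
    intro n hn
    have h1 : {y | (n : ℕ∞) ≤ R y} = {y | ((n-1 : ℕ) : ℕ∞) < R y} := by
      ext y
      simp only [Set.mem_setOf_eq]
      rw [← ENat.add_one_le_iff (by simp : ((n-1:ℕ) : ℕ∞) ≠ ⊤)]
      have he : ((n-1:ℕ) : ℕ∞) + 1 = (n : ℕ∞) := by
        norm_cast
        omega
      rw [he]
    rw [h1]
    exact hR.isOpen_preimage _
  -- key inequality
  have key : ∀ n : ℕ, 1 ≤ n → μ {y | (n : ℕ∞) ≤ R y} ≤
      limsup (fun N : ℕ =>
        (Set.ncard {j : ℕ | j < N ∧ (n : ℕ∞) ≤ R (f^[j] x)} : ℝ≥0∞) / (N : ℝ≥0∞)) atTop := by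
    intro n hn
    set a : ℕ → ℝ≥0∞ := fun N =>
      (Set.ncard {j : ℕ | j < N ∧ (n : ℕ∞) ≤ R (f^[j] x)} : ℝ≥0∞) / (N : ℝ≥0∞) with ha
    have hG := hopen n hn
    have hle : (Pμ : Measure X) {y | (n : ℕ∞) ≤ R y} ≤
        liminf (fun i => (P i : Measure X) {y | (n : ℕ∞) ≤ R y}) atTop :=
      ProbabilityMeasure.le_liminf_measure_open_of_tendsto hP hG
    have happly : ∀ i, (P i : Measure X) {y | (n : ℕ∞) ≤ R y} = a (φ i) := by
      intro i
      exact emp_apply (fun j => f^[j] x) (φ i) hG.measurableSet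
    calc μ {y | (n : ℕ∞) ≤ R y}
        ≤ liminf (fun i => a (φ i)) atTop := by
          have hle' := hle; simp only [happly] at hle'; exact hle'
      _ ≤ limsup (fun i => a (φ i)) atTop := liminf_le_limsup
      _ = limsup a (map φ atTop) := Filter.limsup_comp a φ atTop
      _ ≤ limsup a atTop := limsup_le_limsup_of_le hφ.tendsto_atTop
  refine ⟨key, ?_, ?_⟩
  · -- integral bound
    have hmeas : ∀ n : ℕ, MeasurableSet {y | ((n+1:ℕ) : ℕ∞) ≤ R y} :=
      fun n => (hopen (n+1) (by omega)).measurableSet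
    have hrepr : ∫⁻ y, (R y : ℝ≥0∞) ∂μ
        = ∑' n : ℕ, μ {y | ((n+1:ℕ) : ℕ∞) ≤ R y} := by
      have : ∀ y, (R y : ℝ≥0∞)
          = ∑' n : ℕ, Set.indicator {y | ((n+1:ℕ) : ℕ∞) ≤ R y} (fun _ => (1:ℝ≥0∞)) y := by
        intro y
        rw [enat_tsum_repr (R y)]
        congr 1
        ext n
        simp [Set.indicator_apply]
      simp_rw [this]
      rw [lintegral_tsum (fun n => ((measurable_const.indicator (hmeas n)).aemeasurable))]
      congr 1
      ext n
      exact lintegral_indicator_one (hmeas n)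
    rw [hrepr]
    exact ENNReal.tsum_le_tsum fun n => key (n+1) (by omega)
  · -- vanishing residue
    intro h
    have hsub : ∀ n : ℕ, 1 ≤ n → μ {y | R y = ⊤} ≤ μ {y | (n : ℕ∞) ≤ R y} := by
      intro n hn
      apply measure_mono
      intro y hy
      simp only [Set.mem_setOf_eq] at hy ⊢
      rw [hy]
      exact le_top
    have : μ {y | R y = ⊤} ≤ 0 := by
      refine ge_of_tendsto h ?_
      filter_upwards [eventually_ge_atTop 1] with n hn
      exact (hsub n hn).trans (key n hn)
    exact le_antisymm this zero_le
end
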